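/- (Key estimate in the proof of the Proposition: weighted L² bound for the band spectral projector of the free Laplacian on ℝ) There exists an absolute constant C > 0 such that for every Ψ ∈ L²(ℝ), every natural number N ≥ 1, and every Schwartz function f on ℝ, ∫_ℝ |Ψ(x)|² |(P_N f)(x)|² dx ≤ C² N^{-1/2} ‖Ψ‖²_{L²(ℝ)} ‖f‖²_{L²(ℝ)}, where (P_N f)(x) = (1/(2π)) ∫_{√N ≤ |ξ| < √(N+1)} e^{i x ξ} f̂(ξ) dξ. -/

import Mathlib

open MeasureTheory Real


open MeasureTheory Real Complex
open scoped FourierTransform ComplexConjugate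

lemma flip_innerL : (innerₗ ℝ).flip = innerₗ ℝ := by
  refine LinearMap.ext fun x => LinearMap.ext fun y => ?_
  simp only [LinearMap.flip_apply, innerₗ_apply_apply]
  exact real_inner_comm x y

lemma conj_exp_mul (r : ℝ) (z : ℂ) :
    Complex.exp ((-r : ℝ) * Complex.I) * (starRingEnd ℂ) z
      = (starRingEnd ℂ) (Complex.exp ((r : ℝ) * Complex.I) * z) := by
  rw [map_mul, ← Complex.exp_conj, map_mul, Complex.conj_I, Complex.conj_ofReal]
  push_cast
  ring_nf

lemma mul_conj_self (z : ℂ) : z * (starRingEnd ℂ) z = (RCLike.ofReal (‖z‖ ^ 2) : ℂ) := by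
  rw [RCLike.mul_conj z]
  norm_cast

lemma plancherel_schwartz (f : SchwartzMap ℝ ℂ) :
    ∫ ξ : ℝ, ‖𝓕 (⇑f) ξ‖ ^ 2 = ∫ x : ℝ, ‖f x‖ ^ 2 := by
  set g : SchwartzMap ℝ ℂ := SchwartzMap.fourierTransformCLM ℂ f with hgdef
  have hgf : ⇑g = 𝓕 ⇑f := rfl
  set u : ℝ → ℂ := fun ξ => (starRingEnd ℂ) (g ξ) with hu
  have hu_cont : Continuous u := continuous_star.comp g.continuous
  have hu_int : Integrable u := by
    refine g.integrable.norm.mono' hu_cont.aestronglyMeasurable ?_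
    filter_upwards with x
    simp [u]
  have hFu : 𝓕 u = fun x => (starRingEnd ℂ) (f x) := by
    ext x
    rw [Real.fourier_eq']
    have h1 : ∀ v : ℝ, Complex.exp (((-2 * π * (inner ℝ v x : ℝ) : ℝ) : ℂ) * Complex.I) • u v
        = (starRingEnd ℂ) (Complex.exp (((2 * π * (inner ℝ v x : ℝ) : ℝ) : ℂ) * Complex.I) • g v) := by
      intro v
      simp only [smul_eq_mul, hu]
      rw [show (-2 * π * (inner ℝ v x : ℝ)) = -(2 * π * (inner ℝ v x : ℝ)) by ring]
      exact conj_exp_mul (2 * π * (inner ℝ v x : ℝ)) (g v)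
    simp only [h1]
    rw [integral_conj, ← Real.fourierInv_eq']
    have hinv := Continuous.fourierInv_fourier_eq f.continuous f.integrable (hgf ▸ g.integrable)
    rw [hgf, hinv]
  have key := VectorFourier.integral_fourierIntegral_smul_eq_flip
    (e := Real.fourierChar) (L := innerₗ ℝ) (μ := (volume : Measure ℝ)) (ν := (volume : Measure ℝ))
    Real.continuous_fourierChar (by simpa using continuous_inner (𝕜 := ℝ) (E := ℝ))
    f.integrable hu_int
  rw [flip_innerL] at key
  have lhs_eq : ∫ ξ : ℝ, (VectorFourier.fourierIntegral Real.fourierChar volume (innerₗ ℝ) (⇑f) ξ) • u ξ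
      = ∫ ξ : ℝ, (RCLike.ofReal (‖𝓕 (⇑f) ξ‖ ^ 2) : ℂ) := by
    congr 1
    ext ξ
    have : VectorFourier.fourierIntegral Real.fourierChar volume (innerₗ ℝ) (⇑f) ξ = 𝓕 (⇑f) ξ := rfl
    rw [this, smul_eq_mul, hu, ← hgf]
    exact mul_conj_self (g ξ)
  have rhs_eq : ∫ x : ℝ, (f x) • (VectorFourier.fourierIntegral Real.fourierChar volume (innerₗ ℝ) u x)
      = ∫ x : ℝ, (RCLike.ofReal (‖f x‖ ^ 2) : ℂ) := by
    congr 1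
    ext x
    have : VectorFourier.fourierIntegral Real.fourierChar volume (innerₗ ℝ) u x = 𝓕 u x := rfl
    rw [this, hFu, smul_eq_mul]
    exact mul_conj_self (f x)
  rw [lhs_eq, rhs_eq] at key
  rw [integral_ofReal, integral_ofReal] at key
  exact_mod_cast key


section aux

lemma band_subset (aa bb : ℝ) :
    {ξ : ℝ | aa ≤ |ξ| ∧ |ξ| < bb} ⊆ Set.Ioc (-bb) (-aa) ∪ Set.Ico aa bb := by
  intro ξ hξ
  obtain ⟨h2, h3⟩ := hξ
  rcases le_or_gt 0 ξ with h | h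
  · right
    rw [_root_.abs_of_nonneg h] at h2 h3
    exact ⟨h2, h3⟩
  · left
    rw [_root_.abs_of_neg h] at h2 h3
    constructor <;> linarith

lemma sqrt_succ_le (N : ℕ) (hN : 1 ≤ N) :
    2 * (Real.sqrt (N + 1) - Real.sqrt N) ≤ (N : ℝ) ^ (-(1:ℝ)/2) := by
  have hNpos : (0:ℝ) < N := by exact_mod_cast Nat.lt_of_lt_of_le Nat.zero_lt_one hN
  have ha : 0 < Real.sqrt N := Real.sqrt_pos.mpr hNpos
  have hsq : Real.sqrt N ^ 2 = N := Real.sq_sqrt hNpos.le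
  have hb_le : Real.sqrt (N + 1) ≤ Real.sqrt N + 1 / (2 * Real.sqrt N) := by
    have h2 : ((N:ℝ) + 1) ≤ (Real.sqrt N + 1 / (2 * Real.sqrt N)) ^ 2 := by
      have e : (Real.sqrt N + 1 / (2 * Real.sqrt N)) ^ 2
          = Real.sqrt N ^ 2 + 1 + 1 / (4 * Real.sqrt N ^ 2) := by
        field_simp
        ring
      rw [e, hsq]
      have : 0 < 1 / (4 * (N:ℝ)) := by positivity
      linarith
    calc Real.sqrt ((N:ℝ) + 1) ≤ Real.sqrt ((Real.sqrt N + 1 / (2 * Real.sqrt N)) ^ 2) :=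
          Real.sqrt_le_sqrt h2
      _ = Real.sqrt N + 1 / (2 * Real.sqrt N) := Real.sqrt_sq (by positivity)
  have hrp : (N : ℝ) ^ (-(1:ℝ)/2) = 1 / Real.sqrt N := by
    rw [show (-(1:ℝ)/2) = -(1/2 : ℝ) by ring, Real.rpow_neg hNpos.le, Real.sqrt_eq_rpow]
    norm_num
  rw [hrp]
  have : 2 * (1 / (2 * Real.sqrt N)) = 1 / Real.sqrt N := by
    field_simp
  linarith

end aux


/-- **Key estimate in the proof of the Proposition:** weighted `L²` bound for the band
spectral projector of the free Laplacian on `ℝ`. There is an absolute constant `C > 0`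
such that for every `Ψ ∈ L²(ℝ)`, every `N ≥ 1` and every Schwartz function `f`,
`∫ |Ψ(x)|² |(P_N f)(x)|² dx ≤ C² N^{-1/2} ‖Ψ‖²_{L²} ‖f‖²_{L²}`, where
`(P_N f)(x) = (1/(2π)) ∫_{√N ≤ |ξ| < √(N+1)} e^{ixξ} f̂(ξ) dξ` and
`f̂(ξ) = ∫ e^{-iyξ} f(y) dy`. -/
theorem weighted_band_projector_bound :
    ∃ C > (0:ℝ), ∀ (Ψ : ℝ → ℝ), MemLp Ψ 2 (volume : Measure ℝ) →
      ∀ N : ℕ, 1 ≤ N →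
      ∀ f : SchwartzMap ℝ ℂ,
      (∫ x : ℝ, ‖Ψ x‖^2 *
          ‖((2*π : ℝ) : ℂ)⁻¹ *
            ∫ ξ in {ξ : ℝ | Real.sqrt N ≤ |ξ| ∧ |ξ| < Real.sqrt (N+1)},
              Complex.exp (Complex.I * x * ξ) *
                (∫ y : ℝ, Complex.exp (-(Complex.I * y * ξ)) * f y)‖^2)
        ≤ C^2 * (N:ℝ) ^ (-(1:ℝ)/2) * (∫ x : ℝ, ‖Ψ x‖^2) * (∫ x : ℝ, ‖f x‖^2) := by
  refine ⟨1, one_pos, ?_⟩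
  intro Ψ hΨ N hN f
  set n : ℝ := (N:ℝ) ^ (-(1:ℝ)/2) with hndef
  have hn : 0 ≤ n := Real.rpow_nonneg (Nat.cast_nonneg N) _
  set S : Set ℝ := {ξ : ℝ | Real.sqrt N ≤ |ξ| ∧ |ξ| < Real.sqrt (N+1)} with hSdef
  have hSm : MeasurableSet S := by
    have : S = (fun ξ : ℝ => |ξ|) ⁻¹' (Set.Ico (Real.sqrt N) (Real.sqrt (N+1))) :=
      Set.ext fun ξ => Iff.rfl
    rw [this]
    exact measurable_abs measurableSet_Ico
  set g : SchwartzMap ℝ ℂ := SchwartzMap.fourierTransformCLM ℂ f with hgdef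
  have h2π : (0:ℝ) < 2 * π := Real.two_pi_pos
  have hfhat : ∀ ξ : ℝ, (∫ y : ℝ, Complex.exp (-(Complex.I * y * ξ)) * f y)
      = g (ξ / (2*π)) := by
    intro ξ
    have hg : g (ξ / (2*π)) = 𝓕 (⇑f) (ξ / (2*π)) := rfl
    rw [hg, Real.fourier_eq']
    congr 1
    funext y
    rw [smul_eq_mul]
    have hinner : (inner ℝ y (ξ / (2*π)) : ℝ) = y * (ξ / (2*π)) := by
      simp [RCLike.inner_apply]
      ring
    have harg : ((-2 * π * (inner ℝ y (ξ / (2*π)) : ℝ) : ℝ) : ℂ) * Complex.I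
        = -(Complex.I * y * ξ) := by
      rw [hinner]
      have hr : (-2 * π * (y * (ξ / (2*π))) : ℝ) = -(y * ξ) := by
        field_simp
      rw [hr]
      push_cast
      ring
    rw [harg]
  obtain ⟨C0, hC0⟩ := g.decay 0 0
  have hC0' : ∀ x : ℝ, ‖g x‖ ≤ C0 := by
    intro x
    simpa [norm_iteratedFDeriv_zero] using hC0.2 x
  have hg2 : Integrable (fun w : ℝ => ‖g w‖^2) := by
    refine (g.integrable.norm.const_mul C0).mono'
      ((g.continuous.norm.pow 2).aestronglyMeasurable) ?_
    filter_upwards with w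
    rw [Real.norm_of_nonneg (by positivity), pow_two]
    exact mul_le_mul_of_nonneg_right (hC0' w) (norm_nonneg _)
  have hq_int : Integrable (fun ξ : ℝ => ‖g (ξ / (2*π))‖^2) := hg2.comp_div h2π.ne'
  have hB : (0:ℝ) ≤ ∫ x : ℝ, ‖f x‖^2 := integral_nonneg fun x => by positivity
  set B := ∫ x : ℝ, ‖f x‖^2 with hBdef
  have hplan : ∫ ξ : ℝ, ‖g (ξ / (2*π))‖^2 = (2*π) * B := by
    rw [Measure.integral_comp_div (fun w => ‖g w‖^2) (2*π), smul_eq_mul, abs_of_pos h2π]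
    congr 1
    exact plancherel_schwartz f
  -- measure of the band
  have hsub := band_subset (Real.sqrt N) (Real.sqrt (N+1))
  have hab : Real.sqrt N ≤ Real.sqrt (N+1) := Real.sqrt_le_sqrt (by linarith)
  have hvol : volume S ≤ ENNReal.ofReal (2 * (Real.sqrt (N+1) - Real.sqrt N)) := by
    refine (measure_mono hsub).trans ((measure_union_le _ _).trans ?_)
    rw [Real.volume_Ioc, Real.volume_Ico,
      show (-(Real.sqrt N) - -(Real.sqrt (N+1))) = Real.sqrt (N+1) - Real.sqrt N by ring,
      ← ENNReal.ofReal_add (by linarith) (by linarith)]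
    exact ENNReal.ofReal_le_ofReal (le_of_eq (by ring))
  have hfin : volume S < ⊤ := lt_of_le_of_lt hvol ENNReal.ofReal_lt_top
  set m := (volume S).toReal with hmdef
  have hm_nonneg : 0 ≤ m := ENNReal.toReal_nonneg
  have hm_le : m ≤ n := by
    refine ENNReal.toReal_le_of_le_ofReal hn (hvol.trans ?_)
    exact ENNReal.ofReal_le_ofReal (sqrt_succ_le N hN)
  haveI : IsFiniteMeasure (volume.restrict S) :=
    ⟨by rw [Measure.restrict_apply_univ]; exact hfin⟩
  set A := ∫ ξ in S, ‖g (ξ / (2*π))‖^2 with hAdef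
  have hA_nonneg : 0 ≤ A := integral_nonneg fun ξ => by positivity
  have hA_le : A ≤ 2 * π * B :=
    (setIntegral_le_integral hq_int
      (Filter.Eventually.of_forall fun ξ => by positivity)).trans hplan.le
  have hcont : Continuous fun ξ : ℝ => ‖g (ξ / (2*π))‖ :=
    (g.continuous.comp (continuous_id.div_const _)).norm
  have hCS : (∫ ξ in S, ‖g (ξ / (2*π))‖) ≤ Real.sqrt A * Real.sqrt m := by
    have hpq : (2:ℝ).HolderConjugate 2 := Real.HolderConjugate.two_two
    have h2 : ENNReal.ofReal (2:ℝ) = 2 := by norm_num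
    have hmemf : MemLp (fun ξ : ℝ => ‖g (ξ / (2*π))‖) (ENNReal.ofReal 2)
        (volume.restrict S) := by
      rw [h2]
      refine (memLp_top_of_bound hcont.aestronglyMeasurable C0
        (Filter.Eventually.of_forall fun ξ => ?_)).mono_exponent le_top
      rw [norm_norm]
      exact hC0' _
    have hmem1 : MemLp (fun _ : ℝ => (1:ℝ)) (ENNReal.ofReal 2) (volume.restrict S) := by
      rw [h2]
      exact memLp_const 1
    have h := integral_mul_le_Lp_mul_Lq_of_nonneg hpq
      (Filter.Eventually.of_forall fun ξ => norm_nonneg _)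
      (Filter.Eventually.of_forall fun ξ => zero_le_one) hmemf hmem1
    simp only [mul_one, Real.rpow_two, one_pow, integral_const, measureReal_def,
      Measure.restrict_apply_univ, smul_eq_mul, ← Real.sqrt_eq_rpow] at h
    exact h
  have hexp : ∀ x ξ : ℝ, ‖Complex.exp (Complex.I * x * ξ)‖ = 1 := by
    intro x ξ
    rw [Complex.norm_exp]
    norm_num [Complex.mul_re, Complex.mul_im]
  have hpoint : ∀ x : ℝ,
      ‖((2*π : ℝ) : ℂ)⁻¹ *
          ∫ ξ in S, Complex.exp (Complex.I * x * ξ) *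
            (∫ y : ℝ, Complex.exp (-(Complex.I * y * ξ)) * f y)‖^2 ≤ n * B := by
    intro x
    have hIle : ‖∫ ξ in S, Complex.exp (Complex.I * x * ξ) *
        (∫ y : ℝ, Complex.exp (-(Complex.I * y * ξ)) * f y)‖
          ≤ Real.sqrt A * Real.sqrt m := by
      refine (norm_integral_le_integral_norm _).trans (le_trans (le_of_eq ?_) hCS)
      congr 1
      funext ξ
      rw [hfhat ξ, norm_mul, hexp, one_mul]
    have hsq2 : ‖∫ ξ in S, Complex.exp (Complex.I * x * ξ) *
        (∫ y : ℝ, Complex.exp (-(Complex.I * y * ξ)) * f y)‖^2 ≤ A * m := by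
      refine le_trans (pow_le_pow_left₀ (norm_nonneg _) hIle 2) (le_of_eq ?_)
      rw [← Real.sqrt_mul hA_nonneg, Real.sq_sqrt (mul_nonneg hA_nonneg hm_nonneg)]
    have hn2π : ‖((2*π : ℝ) : ℂ)‖ = 2*π := by
      rw [Complex.norm_real]
      exact abs_of_pos h2π
    rw [norm_mul, norm_inv, hn2π, mul_pow]
    have h1le : (2*π)⁻¹ ≤ (1:ℝ) := by
      rw [inv_le_one_iff₀]
      right
      nlinarith [Real.pi_gt_three]
    calc ((2*π)⁻¹)^2 * ‖∫ ξ in S, Complex.exp (Complex.I * x * ξ) *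
          (∫ y : ℝ, Complex.exp (-(Complex.I * y * ξ)) * f y)‖^2
        ≤ ((2*π)⁻¹)^2 * (A * m) := mul_le_mul_of_nonneg_left hsq2 (by positivity)
      _ ≤ ((2*π)⁻¹)^2 * ((2*π*B) * n) :=
          mul_le_mul_of_nonneg_left
            (mul_le_mul hA_le hm_le hm_nonneg (mul_nonneg h2π.le hB)) (by positivity)
      _ = (2*π)⁻¹ * (B * n) := by
          have hc : (2*π)⁻¹ * (2*π) = 1 := inv_mul_cancel₀ h2π.ne'
          linear_combination ((2*π)⁻¹ * B * n) * hc
      _ ≤ 1 * (B * n) := mul_le_mul_of_nonneg_right h1le (mul_nonneg hB hn)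
      _ = n * B := by ring
  have hΨ2 : Integrable (fun x : ℝ => ‖Ψ x‖^2) := by
    have := hΨ.integrable_norm_rpow two_ne_zero ENNReal.ofNat_ne_top
    simpa [ENNReal.toReal_ofNat, Real.rpow_two] using this
  have hP : 0 ≤ ∫ x : ℝ, ‖Ψ x‖^2 := integral_nonneg fun x => by positivity
  calc (∫ x : ℝ, ‖Ψ x‖^2 *
          ‖((2*π : ℝ) : ℂ)⁻¹ *
            ∫ ξ in S, Complex.exp (Complex.I * x * ξ) *
              (∫ y : ℝ, Complex.exp (-(Complex.I * y * ξ)) * f y)‖^2)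
      ≤ ∫ x : ℝ, ‖Ψ x‖^2 * (n * B) := by
        refine integral_mono_of_nonneg (Filter.Eventually.of_forall fun x => by positivity)
          (hΨ2.mul_const (n * B)) (Filter.Eventually.of_forall fun x => ?_)
        exact mul_le_mul_of_nonneg_left (hpoint x) (by positivity)
    _ = (∫ x : ℝ, ‖Ψ x‖^2) * (n * B) := integral_mul_const _ _
    _ = 1^2 * n * (∫ x : ℝ, ‖Ψ x‖^2) * B := by ring
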